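/- arXiv:2207.03099 — 3 statements merged into one kernel-verified Lean document; each statement's English description precedes it below -/
import Mathlib

section
/- Let λ₀ > 0, α₀ ∈ (0,1), λ₁ > 0, α₁ > 0 and T > 0. Then the delta effect W ↦ ΔF(W,T) = exp(-λ₀((T+W)^{α₀} - W^{α₀})) - exp(-λ₁ T^{α₁}) is strictly monotone increasing on [0, ∞) as a function of W. -/
open Real

lemma aux_strictAntiOn (T a : ℝ) (hT : 0 < T) (ha : a ∈ Set.Ioo (0:ℝ) 1) :
    StrictAntiOn (fun W : ℝ => (T + W) ^ a - W ^ a) (Set.Ici (0:ℝ)) := by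
  have hcont : ContinuousOn (fun W : ℝ => (T + W) ^ a - W ^ a) (Set.Ici (0:ℝ)) := by
    apply ContinuousOn.sub
    · exact ((continuous_const.add continuous_id).continuousOn).rpow_const
        (fun x _ => Or.inr ha.1.le)
    · exact continuousOn_id.rpow_const (fun x _ => Or.inr ha.1.le)
  have hderiv : ∀ x ∈ interior (Set.Ici (0:ℝ)),
      HasDerivAt (fun W : ℝ => (T + W) ^ a - W ^ a)
        (1 * a * (T + x) ^ (a - 1) - 1 * a * x ^ (a - 1)) x := by
    intro x hx
    rw [interior_Ici] at hx
    have hx0 : (0:ℝ) < x := hx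
    have h1 : HasDerivAt (fun W : ℝ => (T + W) ^ a) (1 * a * (T + x) ^ (a - 1)) x :=
      ((hasDerivAt_id x).const_add T).rpow_const (Or.inl (by positivity))
    have h2 : HasDerivAt (fun W : ℝ => W ^ a) (1 * a * x ^ (a - 1)) x :=
      (hasDerivAt_id x).rpow_const (Or.inl hx0.ne')
    exact h1.sub h2
  apply strictAntiOn_of_deriv_neg (convex_Ici 0) hcont
  intro x hx
  rw [(hderiv x hx).deriv]
  rw [interior_Ici] at hx
  have hlt : (T + x) ^ (a - 1) < x ^ (a - 1) :=
    Real.rpow_lt_rpow_of_neg hx (by linarith) (by linarith [ha.2])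
  nlinarith [ha.1]

/-- For `λ₀ > 0`, `α₀ ∈ (0,1)`, `λ₁ > 0`, `α₁ > 0` and `T > 0`, the delta effect
`W ↦ exp(-λ₀((T+W)^α₀ - W^α₀)) - exp(-λ₁ T^α₁)` is strictly monotone increasing on `[0, ∞)`. -/
theorem delta_effect_strictMonoOn
    (lam₀ alp₀ lam₁ alp₁ T : ℝ)
    (hlam₀ : 0 < lam₀) (halp₀ : alp₀ ∈ Set.Ioo (0 : ℝ) 1)
    (hlam₁ : 0 < lam₁) (halp₁ : 0 < alp₁) (hT : 0 < T) :
    StrictMonoOn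
      (fun W : ℝ =>
        Real.exp (-(lam₀ * ((T + W) ^ alp₀ - W ^ alp₀))) - Real.exp (-(lam₁ * T ^ alp₁)))
      (Set.Ici (0 : ℝ)) := by
  intro x hx y hy hxy
  have h := aux_strictAntiOn T alp₀ hT halp₀ hx hy hxy
  simp only [sub_lt_sub_iff_right, Real.exp_lt_exp, neg_lt_neg_iff]
  exact (mul_lt_mul_iff_right₀ hlam₀).mpr h
end

section
/- Let λ > 0, α ∈ (0,1) and T > 0, and let F(x) = 1 - exp(-λ x^α) be the Weibull cumulative distribution function. Then the conditional visit probability W ↦ (F(T+W) - F(W))/(1 - F(W)) is strictly monotone decreasing on [0, ∞) as a function of W. -/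
open Real

lemma rpow_diff_strictAntiOn (alp T : ℝ) (halp : alp ∈ Set.Ioo (0 : ℝ) 1) (hT : 0 < T) :
    StrictAntiOn (fun x : ℝ => (T + x) ^ alp - x ^ alp) (Set.Ici (0 : ℝ)) := by
  obtain ⟨h0, h1⟩ := halp
  intro a ha b hb hab
  simp only [Set.mem_Ici] at ha hb
  have hcc := Real.strictConcaveOn_rpow h0 h1
  set θ : ℝ := T / (b + T - a) with hθdef
  have hden : 0 < b + T - a := by linarith
  have hθ0 : 0 < θ := div_pos hT hden
  have hθ1 : θ < 1 := (div_lt_one hden).2 (by linarith)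
  have hane : a ≠ b + T := by intro h; linarith
  have hmem_a : a ∈ Set.Ici (0 : ℝ) := ha
  have hmem_bt : b + T ∈ Set.Ici (0 : ℝ) := by simp; linarith
  have key1 := hcc.2 hmem_a hmem_bt hane hθ0 (by linarith : (0:ℝ) < 1 - θ) (by ring)
  have key2 := hcc.2 hmem_a hmem_bt hane (by linarith : (0:ℝ) < 1 - θ) hθ0 (by ring)
  have e1 : θ * a + (1 - θ) * (b + T) = b := by
    field_simp [hθdef]
    have hm : θ * (b + T - a) = T := by rw [hθdef]; exact div_mul_cancel₀ T hden.ne'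
    linear_combination (-1 : ℝ) * hm
  have e2 : (1 - θ) * a + θ * (b + T) = a + T := by
    field_simp [hθdef]
    have hm : θ * (b + T - a) = T := by rw [hθdef]; exact div_mul_cancel₀ T hden.ne'
    linear_combination hm
  simp only [smul_eq_mul] at key1 key2
  rw [e1] at key1
  rw [e2] at key2
  have hb' : b ^ alp + (a + T) ^ alp > a ^ alp + (b + T) ^ alp := by
    nlinarith [key1, key2]
  have hTa : T + a = a + T := by ring
  have hTb : T + b = b + T := by ring
  simp only [hTa, hTb]
  linarith

/-- For `λ > 0`, `α ∈ (0,1)`, `T > 0`, with `F(x) = 1 - exp(-λ x^α)`, the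
conditional visit probability `W ↦ (F(T+W) - F(W))/(1 - F(W))` is strictly decreasing on
`[0, ∞)`. -/
theorem conditional_visit_prob_strictAntiOn
    (lam alp T : ℝ) (hlam : 0 < lam) (halp : alp ∈ Set.Ioo (0 : ℝ) 1) (hT : 0 < T)
    (F : ℝ → ℝ) (hF : ∀ x : ℝ, F x = 1 - Real.exp (-(lam * x ^ alp))) :
    StrictAntiOn (fun W : ℝ => (F (T + W) - F W) / (1 - F W)) (Set.Ici (0 : ℝ)) := by
  have hrepr : ∀ W : ℝ, (F (T + W) - F W) / (1 - F W)
      = 1 - Real.exp (-(lam * ((T + W) ^ alp - W ^ alp))) := by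
    intro W
    rw [hF, hF]
    have hne : Real.exp (-(lam * W ^ alp)) ≠ 0 := (Real.exp_pos _).ne'
    field_simp
    rw [show Real.exp (-(lam * (T + W) ^ alp)) = Real.exp (-(lam * W ^ alp)) * Real.exp (-(lam * ((T + W) ^ alp - W ^ alp))) by rw [← Real.exp_add]; congr 1; ring]
    ring
  intro a ha b hb hab
  simp only
  rw [hrepr a, hrepr b]
  have hg := rpow_diff_strictAntiOn alp T halp hT ha hb hab
  simp only at hg
  have : -(lam * ((T + a) ^ alp - a ^ alp)) < -(lam * ((T + b) ^ alp - b ^ alp)) := by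
    have := mul_lt_mul_of_pos_left hg hlam
    linarith
  have := Real.exp_lt_exp.2 this
  linarith
end

section
/- Let μ be a Borel probability measure on ℝ such that μ((x, ∞)) = exp(-λ x^α) for every x ≥ 0, where λ > 0 and α ∈ (0,1). Then for every T > 0, the function W ↦ μ((W, T+W]) / μ((W, ∞)) is strictly monotone decreasing on [0, ∞). -/
open Real MeasureTheory

private lemma gap_strictAnti {alp T : ℝ} (halp : alp ∈ Set.Ioo (0 : ℝ) 1) (hT : 0 < T) :
    StrictAntiOn (fun W : ℝ => (T + W) ^ alp - W ^ alp) (Set.Ici (0 : ℝ)) := by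
  obtain ⟨ha0, ha1⟩ := halp
  apply strictAntiOn_of_deriv_neg (convex_Ici 0)
  · exact ((Real.continuous_rpow_const ha0.le).comp (continuous_const.add continuous_id)).continuousOn.sub
      (Real.continuous_rpow_const ha0.le).continuousOn
  · intro x hx
    rw [interior_Ici] at hx
    have hx0 : 0 < x := hx
    have h1 : HasDerivAt (fun W : ℝ => (T + W) ^ alp) (alp * (T + x) ^ (alp - 1) * 1) x := by
      exact (Real.hasDerivAt_rpow_const (x := T + x) (p := alp)
        (Or.inl (by positivity))).comp x ((hasDerivAt_id x).const_add T)
    have h2 : HasDerivAt (fun W : ℝ => W ^ alp) (alp * x ^ (alp - 1)) x :=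
      Real.hasDerivAt_rpow_const (Or.inl hx0.ne')
    have h : deriv (fun W : ℝ => (T + W) ^ alp - W ^ alp) x = _ := (h1.sub h2).deriv
    rw [h]
    have : (T + x) ^ (alp - 1) < x ^ (alp - 1) :=
      Real.rpow_lt_rpow_of_neg hx0 (by linarith) (by linarith)
    nlinarith

/-- Let `μ` be a Borel probability measure on `ℝ` with survival function
`μ((x,∞)) = exp(-λ x^α)` for all `x ≥ 0`, where `λ > 0` and `α ∈ (0,1)`. Then for every
`T > 0`, the conditional probability `W ↦ μ((W, T+W]) / μ((W,∞))` is strictly decreasing on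
`[0, ∞)`. -/
theorem weibull_measure_conditional_strictAntiOn
    (μ : Measure ℝ) [IsProbabilityMeasure μ]
    (lam alp : ℝ) (hlam : 0 < lam) (halp : alp ∈ Set.Ioo (0 : ℝ) 1)
    (hsurv : ∀ x : ℝ, 0 ≤ x → μ (Set.Ioi x) = ENNReal.ofReal (Real.exp (-(lam * x ^ alp))))
    (T : ℝ) (hT : 0 < T) :
    StrictAntiOn (fun W : ℝ => μ (Set.Ioc W (T + W)) / μ (Set.Ioi W))
      (Set.Ici (0 : ℝ)) := by
  obtain ⟨ha0, ha1⟩ := halp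
  have key : ∀ W : ℝ, 0 ≤ W → μ (Set.Ioc W (T + W)) / μ (Set.Ioi W)
      = ENNReal.ofReal (1 - Real.exp (-(lam * ((T + W) ^ alp - W ^ alp)))) := by
    intro W hW
    have hTW : (0:ℝ) ≤ T + W := by linarith
    set e1 := Real.exp (-(lam * W ^ alp)) with he1
    set e2 := Real.exp (-(lam * (T + W) ^ alp)) with he2
    have hIoc : Set.Ioc W (T + W) = Set.Ioi W \ Set.Ioi (T + W) := by
      rw [Set.Ioi_diff_Ioi]
    have hμ1 : μ (Set.Ioi W) = ENNReal.ofReal e1 := hsurv W hW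
    have hμ2 : μ (Set.Ioi (T + W)) = ENNReal.ofReal e2 := hsurv (T + W) hTW
    have hsub : Set.Ioi (T + W) ⊆ Set.Ioi W := Set.Ioi_subset_Ioi (by linarith)
    have hdiff : μ (Set.Ioc W (T + W)) = ENNReal.ofReal e1 - ENNReal.ofReal e2 := by
      rw [hIoc, measure_diff hsub measurableSet_Ioi.nullMeasurableSet (measure_ne_top μ _),
        hμ1, hμ2]
    have he2pos : 0 < e2 := Real.exp_pos _
    have he1pos : 0 < e1 := Real.exp_pos _
    rw [hdiff, hμ1, ← ENNReal.ofReal_sub _ he2pos.le,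
      ← ENNReal.ofReal_div_of_pos he1pos]
    congr 1
    rw [sub_div, div_self he1pos.ne', he1, he2, ← Real.exp_sub]
    ring_nf
  intro a ha b hb hab
  simp only
  rw [key a ha, key b hb]
  have hga : 0 < (T + a) ^ alp - a ^ alp := by
    have := Real.rpow_lt_rpow ha (by linarith : a < T + a) ha0
    linarith
  have hgab : (T + b) ^ alp - b ^ alp < (T + a) ^ alp - a ^ alp :=
    gap_strictAnti ⟨ha0, ha1⟩ hT ha hb hab
  rw [ENNReal.ofReal_lt_ofReal_iff]
  · have : Real.exp (-(lam * ((T + a) ^ alp - a ^ alp)))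
        < Real.exp (-(lam * ((T + b) ^ alp - b ^ alp))) := by
      apply Real.exp_lt_exp.2
      nlinarith
    linarith
  · have : Real.exp (-(lam * ((T + a) ^ alp - a ^ alp))) < 1 := by
      rw [Real.exp_lt_one_iff]
      nlinarith
    linarith
end
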